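/- Fix σ > 0, let x ∈ 𝒱 with x_b = x_d = m > 1 and let u ∈ [0,1]. Then lim_{ε → 0⁺} ∫₀¹ ((λ(x_b, m − εu + εh) − λ(x_b, m − εu))/ε) h k(h) dh = (e^{−λ(x) m}/G(x)) (∫₀^u h² k(h) dh + u ∫_u^1 h k(h) dh). In particular, for h ∈ [u,1] and ε > 0 small one has λ(x_b, m + ε(h−u)) = λ(x), so only the portion h ≤ u contributes the full quadratic term. -/

import Mathlib

open MeasureTheory Set Filter

noncomputable section

/-- The viable set `𝒱 = {(x_b, x_d) : min(x_b, x_d) > 1}`. -/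
def viable : Set (ℝ × ℝ) := {x : ℝ × ℝ | 1 < min x.1 x.2}

/-- `lam` is a Malthusian parameter function on `𝒱`. -/
def IsMalthusian (lam : ℝ × ℝ → ℝ) : Prop :=
  ∀ x ∈ viable, 0 < lam x ∧ (∫ a in (0:ℝ)..(min x.1 x.2), Real.exp (-(lam x) * a)) = 1

/-- The mean generation time `G(x) = ∫₀^{min(x_b,x_d)} a e^{-λ(x) a} da`. -/
def genTime (lam : ℝ × ℝ → ℝ) (x : ℝ × ℝ) : ℝ :=
  ∫ a in (0:ℝ)..(min x.1 x.2), a * Real.exp (-(lam x) * a)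

/-- The mutation kernel `k(h) = 1_{[-1,1]}(h) e^{−h²/σ²} / ∫_{-1}^1 e^{−z²/σ²} dz`. -/
def kker (σ : ℝ) (h : ℝ) : ℝ :=
  (if h ∈ Icc (-1:ℝ) 1 then Real.exp (-h ^ 2 / σ ^ 2) else 0) /
    ∫ z in (-1:ℝ)..1, Real.exp (-z ^ 2 / σ ^ 2)

namespace DriftAux

def Mfun (l : ℝ) : ℝ := -Real.log (1 - l) / l

def Mderiv (l : ℝ) : ℝ := (l / (1 - l) + Real.log (1 - l)) / l ^ 2

lemma Mderiv_pos {l : ℝ} (h0 : 0 < l) (h1 : l < 1) : 0 < Mderiv l := by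
  have h1l : (0:ℝ) < 1 - l := by linarith
  have hne : (1 - l)⁻¹ ≠ 1 := by
    rw [ne_eq, inv_eq_one]; intro hc; linarith
  have hlog : Real.log (1 - l)⁻¹ < (1 - l)⁻¹ - 1 :=
    Real.log_lt_sub_one_of_pos (by positivity) hne
  rw [Real.log_inv] at hlog
  have he : (1 - l)⁻¹ - 1 = l / (1 - l) := by field_simp; ring
  apply div_pos _ (by positivity)
  rw [he] at hlog; linarith

lemma hasDerivAt_Mfun {l : ℝ} (h0 : 0 < l) (h1 : l < 1) :
    HasDerivAt Mfun (Mderiv l) l := by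
  have h1l : (1:ℝ) - l ≠ 0 := by intro hc; nlinarith [hc]
  have hinner : HasDerivAt (fun t : ℝ => 1 - t) (-1 : ℝ) l := by
    simpa using (hasDerivAt_id l).const_sub (1:ℝ)
  have hlog : HasDerivAt (fun t : ℝ => -Real.log (1 - t)) (1 / (1 - l)) l := by
    have h := ((Real.hasDerivAt_log h1l).comp l hinner).neg
    refine h.congr_deriv ?_
    ring
  have h := hlog.div (hasDerivAt_id l) (ne_of_gt h0)
  refine h.congr_deriv ?_
  unfold Mderiv
  simp only [id]
  field_simp
  ring

lemma strictMonoOn_Mfun : StrictMonoOn Mfun (Ioo (0:ℝ) 1) := by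
  apply strictMonoOn_of_deriv_pos (convex_Ioo 0 1)
  · intro t ht
    exact (hasDerivAt_Mfun ht.1 ht.2).continuousAt.continuousWithinAt
  · intro t ht
    rw [interior_Ioo] at ht
    rw [(hasDerivAt_Mfun ht.1 ht.2).deriv]
    exact Mderiv_pos ht.1 ht.2

lemma integral_exp_neg {l : ℝ} (hl : l ≠ 0) (M : ℝ) :
    ∫ a in (0:ℝ)..M, Real.exp (-l * a) = (1 - Real.exp (-l * M)) / l := by
  have hd : ∀ a ∈ uIcc (0:ℝ) M,
      HasDerivAt (fun a => -Real.exp (-l * a) / l) (Real.exp (-l * a)) a := by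
    intro a _
    have h1 : HasDerivAt (fun a : ℝ => -l * a) (-l) a := by
      simpa using (hasDerivAt_id a).const_mul (-l)
    have h2 := ((Real.hasDerivAt_exp (-l * a)).comp a h1).neg.div_const l
    refine h2.congr_deriv ?_
    field_simp
  rw [intervalIntegral.integral_eq_sub_of_hasDerivAt hd
    (((Real.continuous_exp.comp (continuous_const.mul continuous_id)).continuousOn).intervalIntegrable)]
  simp
  ring

lemma integral_mul_exp_neg {l : ℝ} (hl : l ≠ 0) (M : ℝ) :
    ∫ a in (0:ℝ)..M, a * Real.exp (-l * a)
      = (1 - Real.exp (-l * M) * (1 + l * M)) / l ^ 2 := by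
  have hd : ∀ a ∈ uIcc (0:ℝ) M,
      HasDerivAt (fun a => -((a * l + 1) / l ^ 2) * Real.exp (-l * a))
        (a * Real.exp (-l * a)) a := by
    intro a _
    have h1 : HasDerivAt (fun a : ℝ => -l * a) (-l) a := by
      simpa using (hasDerivAt_id a).const_mul (-l)
    have hexp := (Real.hasDerivAt_exp (-l * a)).comp a h1
    have hpoly : HasDerivAt (fun a : ℝ => -((a * l + 1) / l ^ 2)) (-(l / l ^ 2)) a := by
      exact ((((hasDerivAt_id a).mul_const l).add_const 1).div_const (l^2)).neg.congr_deriv (by ring)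
    have h2 := hpoly.mul hexp
    refine h2.congr_deriv ?_
    simp only [Function.comp_apply]
    field_simp
    ring
  rw [intervalIntegral.integral_eq_sub_of_hasDerivAt hd
    ((continuous_id.mul (Real.continuous_exp.comp (continuous_const.mul continuous_id))).continuousOn.intervalIntegrable)]
  simp
  field_simp
  ring


section Lam
variable (lam : ℝ × ℝ → ℝ)

/-- `Phi lam y = lam (y,y)`: the Malthusian parameter as a function of the diagonal. -/
def Phi (y : ℝ) : ℝ := lam (y, y)

lemma malthusian_facts (hlam : IsMalthusian lam) {p : ℝ × ℝ} (hp : p ∈ viable) :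
    0 < lam p ∧ lam p < 1 ∧ Real.exp (-(lam p) * min p.1 p.2) = 1 - lam p ∧
      Mfun (lam p) = min p.1 p.2 := by
  obtain ⟨hpos, heq⟩ := hlam p hp
  rw [integral_exp_neg (ne_of_gt hpos)] at heq
  have hexp : Real.exp (-(lam p) * min p.1 p.2) = 1 - lam p := by
    field_simp at heq; rw [neg_mul]; linarith
  have hlt1 : lam p < 1 := by
    have := Real.exp_pos (-(lam p) * min p.1 p.2)
    rw [hexp] at this; linarith
  refine ⟨hpos, hlt1, hexp, ?_⟩
  unfold Mfun
  rw [← hexp, Real.log_exp]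
  field_simp

lemma phi_facts (hlam : IsMalthusian lam) {y : ℝ} (hy : 1 < y) :
    Phi lam y ∈ Ioo (0:ℝ) 1 ∧ Mfun (Phi lam y) = y := by
  have hv : ((y, y) : ℝ × ℝ) ∈ viable := by simp [viable, hy]
  obtain ⟨h1, h2, _, h4⟩ := malthusian_facts lam hlam hv
  simp only [min_self] at h4
  exact ⟨⟨h1, h2⟩, h4⟩

lemma lam_eq_phi (hlam : IsMalthusian lam) {p : ℝ × ℝ} (hp : p ∈ viable) :
    lam p = Phi lam (min p.1 p.2) := by
  have hmin : 1 < min p.1 p.2 := hp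
  obtain ⟨h1, h2, _, h4⟩ := malthusian_facts lam hlam hp
  obtain ⟨hm, hMf⟩ := phi_facts lam hlam hmin
  exact strictMonoOn_Mfun.injOn ⟨h1, h2⟩ hm (by rw [h4, hMf])

lemma phi_continuousAt (hlam : IsMalthusian lam) {y₀ : ℝ} (hy₀ : 1 < y₀) :
    ContinuousAt (Phi lam) y₀ := by
  rw [Metric.continuousAt_iff]
  intro ε hε
  obtain ⟨hmem₀, hM₀⟩ := phi_facts lam hlam hy₀
  set l₀ := Phi lam y₀ with hl₀
  set ε₂ := min (ε/2) (min (l₀/2) ((1-l₀)/2)) with hε₂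
  have hε₂pos : 0 < ε₂ := by
    apply lt_min (by linarith) (lt_min (by linarith [hmem₀.1]) (by linarith [hmem₀.2]))
  have hε₂l : ε₂ ≤ l₀/2 := le_trans (min_le_right _ _) (min_le_left _ _)
  have hε₂r : ε₂ ≤ (1-l₀)/2 := le_trans (min_le_right _ _) (min_le_right _ _)
  have hm1 : l₀ - ε₂ ∈ Ioo (0:ℝ) 1 := ⟨by linarith [hmem₀.1], by linarith [hmem₀.2]⟩
  have hm2 : l₀ + ε₂ ∈ Ioo (0:ℝ) 1 := ⟨by linarith [hmem₀.1], by linarith⟩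
  have h₁ : Mfun (l₀ - ε₂) < y₀ := by
    have := strictMonoOn_Mfun hm1 hmem₀ (by linarith)
    rwa [hM₀] at this
  have h₂ : y₀ < Mfun (l₀ + ε₂) := by
    have := strictMonoOn_Mfun hmem₀ hm2 (by linarith)
    rwa [hM₀] at this
  refine ⟨min (y₀ - Mfun (l₀ - ε₂)) (min (Mfun (l₀ + ε₂) - y₀) (y₀ - 1)),
    lt_min (by linarith) (lt_min (by linarith) (by linarith)), ?_⟩
  intro y hy
  rw [Real.dist_eq] at hy ⊢
  have habs := abs_lt.mp hy
  have hy1 : 1 < y := by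
    have := habs.1
    have h3 : -(y₀ - 1) ≤ -(min (y₀ - Mfun (l₀ - ε₂)) (min (Mfun (l₀ + ε₂) - y₀) (y₀ - 1))) := by
      apply neg_le_neg
      exact le_trans (min_le_right _ _) (min_le_right _ _)
    linarith
  obtain ⟨hmemy, hMy⟩ := phi_facts lam hlam hy1
  have hbd1 : Mfun (l₀ - ε₂) < y := by
    have h3 : min (y₀ - Mfun (l₀ - ε₂)) (min (Mfun (l₀ + ε₂) - y₀) (y₀ - 1)) ≤ y₀ - Mfun (l₀ - ε₂) :=
      min_le_left _ _
    linarith [habs.1]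
  have hbd2 : y < Mfun (l₀ + ε₂) := by
    have h3 : min (y₀ - Mfun (l₀ - ε₂)) (min (Mfun (l₀ + ε₂) - y₀) (y₀ - 1)) ≤ Mfun (l₀ + ε₂) - y₀ :=
      le_trans (min_le_right _ _) (min_le_left _ _)
    linarith [habs.2]
  have hlow : l₀ - ε₂ < Phi lam y := by
    by_contra hc
    push_neg at hc
    rcases eq_or_lt_of_le hc with hc' | hc'
    · rw [← hc', hMy] at hbd1; linarith
    · have := strictMonoOn_Mfun hmemy hm1 hc'
      rw [hMy] at this; linarith
  have hhigh : Phi lam y < l₀ + ε₂ := by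
    by_contra hc
    push_neg at hc
    rcases eq_or_lt_of_le hc with hc' | hc'
    · rw [hc', hMy] at hbd2; linarith
    · have := strictMonoOn_Mfun hm2 hmemy hc'
      rw [hMy] at this; linarith
  rw [abs_lt]
  constructor <;> [linarith [hε₂pos, min_le_left (ε/2) (min (l₀/2) ((1-l₀)/2))];
    linarith [min_le_left (ε/2) (min (l₀/2) ((1-l₀)/2))]]

end Lam

lemma kker_intervalIntegrable (σ a b : ℝ) : IntervalIntegrable (kker σ) volume a b := by
  have hmeas : Measurable fun h : ℝ =>
      (if h ∈ Icc (-1:ℝ) 1 then Real.exp (-h ^ 2 / σ ^ 2) else 0) := by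
    apply Measurable.ite measurableSet_Icc _ measurable_const
    exact Real.measurable_exp.comp ((measurable_id.pow_const 2).neg.div_const _)
  have hbase : IntervalIntegrable
      (fun h : ℝ => (if h ∈ Icc (-1:ℝ) 1 then Real.exp (-h ^ 2 / σ ^ 2) else 0)) volume a b := by
    rw [intervalIntegrable_iff]
    apply MeasureTheory.Integrable.mono' (g := fun _ => (1:ℝ))
      (integrableOn_const measure_Ioc_lt_top.ne) hmeas.aestronglyMeasurable
    filter_upwards with h
    rw [Real.norm_eq_abs]
    split_ifs with hc
    · rw [abs_of_nonneg (Real.exp_nonneg _)]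
      apply Real.exp_le_one_iff.mpr
      have : (0:ℝ) ≤ h ^ 2 / σ ^ 2 := by positivity
      rw [neg_div]
      linarith
    · simp
  exact hbase.div_const _

lemma mulK_integrable (σ : ℝ) {a b : ℝ} {ψ : ℝ → ℝ} (hψ : ContinuousOn ψ (uIcc a b)) :
    IntervalIntegrable (fun h => ψ h * (h * kker σ h)) volume a b := by
  have hK : IntervalIntegrable (fun h => h * kker σ h) volume a b :=
    (kker_intervalIntegrable σ a b).continuousOn_mul continuousOn_id
  exact hK.continuousOn_mul hψ

end DriftAux
end

set_option maxHeartbeats 1000000 in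
/-- Limit of the rescaled drift at a diagonal point `x_b = x_d = m` approached from below
at rate `u`:
`lim_{ε→0⁺} ∫₀¹ ((λ(x_b, m−εu+εh) − λ(x_b, m−εu))/ε) h k(h) dh
  = (e^{−λ(x)m}/G(x)) (∫₀^u h² k(h) dh + u ∫_u^1 h k(h) dh)`;
moreover for small `ε > 0` and `h ∈ [u,1]`, `λ(x_b, m + ε(h−u)) = λ(x)`. -/
theorem drift_limit_on_diagonal (σ : ℝ) (hσ : 0 < σ)
    (lam : ℝ × ℝ → ℝ) (hlam : IsMalthusian lam)
    (x : ℝ × ℝ) (hx : x ∈ viable) (hdiag : x.1 = x.2)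
    (u : ℝ) (hu : u ∈ Icc (0:ℝ) 1) :
    Tendsto
      (fun ε : ℝ => ∫ h in (0:ℝ)..1,
        ((lam (x.1, x.1 - ε * u + ε * h) - lam (x.1, x.1 - ε * u)) / ε) * (h * kker σ h))
      (nhdsWithin 0 (Ioi 0))
      (nhds ((Real.exp (-(lam x) * x.1) / genTime lam x) *
        ((∫ h in (0:ℝ)..u, h ^ 2 * kker σ h) + u * ∫ h in u..1, h * kker σ h))) ∧
    ∀ᶠ ε in nhdsWithin (0:ℝ) (Ioi 0), ∀ h ∈ Icc u 1,
      lam (x.1, x.1 + ε * (h - u)) = lam x := by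
  classical
  obtain ⟨hu0, hu1⟩ := hu
  have hminx : min x.1 x.2 = x.1 := by rw [← hdiag, min_self]
  have hm1 : 1 < x.1 := by
    have := hx
    simp only [viable, mem_setOf_eq, hminx] at this
    exact this
  have hxe : ((x.1, x.1) : ℝ × ℝ) = x := Prod.ext rfl hdiag
  set m := x.1 with hmdef
  set φ := DriftAux.Phi lam with hφdef
  have hlx : φ m = lam x := congrArg lam hxe
  set l₀ := lam x with hl₀def
  obtain ⟨hl₀mem, hM₀⟩ := DriftAux.phi_facts lam hlam hm1
  rw [show DriftAux.Phi lam m = l₀ from hlx] at hl₀mem hM₀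
  have hl₀0 : 0 < l₀ := hl₀mem.1
  have hl₀1 : l₀ < 1 := hl₀mem.2
  have hexp : Real.exp (-l₀ * m) = 1 - l₀ := by
    have := (DriftAux.malthusian_facts lam hlam hx).2.2.1
    rwa [hminx] at this
  have hlog : Real.log (1 - l₀) = -l₀ * m := by rw [← hexp, Real.log_exp]
  have hMpos : 0 < DriftAux.Mderiv l₀ := DriftAux.Mderiv_pos hl₀0 hl₀1
  set D := (DriftAux.Mderiv l₀)⁻¹ with hDdef
  constructor
  · -- main limit
    -- derivative of φ at m
    have hev : ∀ᶠ y in nhds m, DriftAux.Mfun (φ y) = y := by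
      filter_upwards [IsOpen.mem_nhds isOpen_Ioi hm1] with y hy
      exact (DriftAux.phi_facts lam hlam hy).2
    have hMder : HasDerivAt DriftAux.Mfun (DriftAux.Mderiv l₀) (φ m) := by
      rw [hlx]
      exact DriftAux.hasDerivAt_Mfun hl₀0 hl₀1
    have hderiv : HasDerivAt φ D m :=
      HasDerivAt.of_local_left_inverse (DriftAux.phi_continuousAt lam hlam hm1)
        hMder (ne_of_gt hMpos) hev
    -- key constant identity
    have hAden : DriftAux.Mderiv l₀ = (1 - m + l₀ * m) / ((1 - l₀) * l₀) := by
      unfold DriftAux.Mderiv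
      rw [hlog]
      have h1 : (1:ℝ) - l₀ ≠ 0 := by linarith
      field_simp
      ring
    have hApos : 0 < 1 - m + l₀ * m := by
      have hden : 0 < (1 - l₀) * l₀ := by nlinarith
      rcases div_pos_iff.mp (hAden ▸ hMpos) with ⟨h, _⟩ | ⟨_, h⟩
      · exact h
      · linarith
    have hA : genTime lam x = (1 - m + l₀ * m) / l₀ := by
      unfold genTime
      rw [hminx, ← hl₀def, DriftAux.integral_mul_exp_neg (ne_of_gt hl₀0), hexp]
      field_simp
      ring
    have hkey : Real.exp (-(lam x) * x.1) / genTime lam x = D := by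
      rw [hA, hDdef, hAden, hexp]
      have h1 : (1:ℝ) - l₀ ≠ 0 := by linarith
      have h2 : (1:ℝ) - m + l₀ * m ≠ 0 := ne_of_gt hApos
      field_simp
    -- integrability helpers
    have hKint : ∀ a b : ℝ, IntervalIntegrable (fun h => h * kker σ h) volume a b :=
      fun a b => (DriftAux.kker_intervalIntegrable σ a b).continuousOn_mul continuousOn_id
    have hminKint : ∀ a b : ℝ,
        IntervalIntegrable (fun h => min h u * (h * kker σ h)) volume a b :=
      fun a b => DriftAux.mulK_integrable σ ((continuous_id.min continuous_const).continuousOn)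
    -- rewrite the limit value
    have hLrw : (Real.exp (-(lam x) * x.1) / genTime lam x) *
        ((∫ h in (0:ℝ)..u, h ^ 2 * kker σ h) + u * ∫ h in u..1, h * kker σ h)
        = ∫ h in (0:ℝ)..1, D * (min h u * (h * kker σ h)) := by
      rw [intervalIntegral.integral_const_mul, hkey]
      congr 1
      rw [← intervalIntegral.integral_add_adjacent_intervals (hminKint 0 u) (hminKint u 1)]
      congr 1
      · apply intervalIntegral.integral_congr
        intro h hh
        rw [uIcc_of_le hu0] at hh
        show h ^ 2 * kker σ h = min h u * (h * kker σ h)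
        rw [min_eq_left hh.2]
        ring
      · rw [show (∫ h in u..(1:ℝ), min h u * (h * kker σ h))
            = ∫ h in u..(1:ℝ), u * (h * kker σ h) from ?_,
          intervalIntegral.integral_const_mul]
        apply intervalIntegral.integral_congr
        intro h hh
        rw [uIcc_of_le hu1] at hh
        show min h u * (h * kker σ h) = u * (h * kker σ h)
        rw [min_eq_right hh.1]
    rw [hLrw]
    rw [Metric.tendsto_nhdsWithin_nhds]
    intro ε hε
    set C := ∫ h in (0:ℝ)..1, |h * kker σ h| with hC
    have hC0 : 0 ≤ C :=
      intervalIntegral.integral_nonneg zero_le_one (fun h _ => abs_nonneg _)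
    set δ' := ε / (2 * (C + 1)) with hδ'
    have hδ'pos : 0 < δ' := by positivity
    have hlo := (hasDerivAt_iff_isLittleO.mp hderiv).def hδ'pos
    rw [Metric.eventually_nhds_iff] at hlo
    obtain ⟨η, hηpos, hη⟩ := hlo
    refine ⟨min (η/2) ((m-1)/2), lt_min (by positivity) (by linarith), ?_⟩
    intro εp hεpIoi hd
    have hεp0 : (0:ℝ) < εp := hεpIoi
    rw [Real.dist_eq, sub_zero, abs_of_pos hεp0] at hd
    have hεpη : εp < η := by
      have := min_le_left (η/2) ((m-1)/2); linarith
    have hεpm : εp < m - 1 := by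
      have := min_le_right (η/2) ((m-1)/2); linarith
    -- uniform derivative estimate
    have hr : ∀ t : ℝ, |t| ≤ 1 →
        |φ (m + εp * t) - φ m - εp * t * D| ≤ δ' * (εp * |t|) := by
      intro t ht
      have h1 : dist (m + εp * t) m < η := by
        rw [Real.dist_eq, add_sub_cancel_left, abs_mul, abs_of_pos hεp0]
        calc εp * |t| ≤ εp * 1 := by nlinarith
          _ < η := by linarith
      have h2 := hη h1
      rw [add_sub_cancel_left, Real.norm_eq_abs, Real.norm_eq_abs, smul_eq_mul,
        abs_mul, abs_of_pos hεp0] at h2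
      exact h2
    -- rewrite the integral
    have hEq : (∫ h in (0:ℝ)..1,
          ((lam (m, m - εp * u + εp * h) - lam (m, m - εp * u)) / εp) * (h * kker σ h))
        = ∫ h in (0:ℝ)..1,
          ((φ (m + εp * min (h - u) 0) - φ (m + εp * (-u))) / εp) * (h * kker σ h) := by
      apply intervalIntegral.integral_congr
      intro h hh
      rw [uIcc_of_le zero_le_one] at hh
      show ((lam (m, m - εp * u + εp * h) - lam (m, m - εp * u)) / εp) * (h * kker σ h)
          = ((φ (m + εp * min (h - u) 0) - φ (m + εp * (-u))) / εp) * (h * kker σ h)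
      have harg : m - εp * u + εp * h = m + εp * (h - u) := by ring
      have harg2 : m - εp * u = m + εp * (-u) := by ring
      have hlow1 : -εp ≤ εp * (h - u) := by
        nlinarith [mul_nonneg hεp0.le (show (0:ℝ) ≤ h - u + 1 by linarith [hh.1])]
      have hlow2 : -εp ≤ εp * (-u) := by nlinarith [mul_le_mul_of_nonneg_left hu1 hεp0.le]
      have hv1 : ((m, m - εp * u + εp * h) : ℝ × ℝ) ∈ viable := by
        simp only [viable, mem_setOf_eq]
        rw [harg]
        exact lt_min_iff.mpr ⟨hm1, by linarith⟩
      have hv2 : ((m, m - εp * u) : ℝ × ℝ) ∈ viable := by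
        simp only [viable, mem_setOf_eq]
        rw [harg2]
        exact lt_min_iff.mpr ⟨hm1, by linarith⟩
      have hmin1 : min (m, m - εp * u + εp * h).1 (m, m - εp * u + εp * h).2
          = m + εp * min (h - u) 0 := by
        simp only
        rw [harg]
        rcases le_total (h - u) 0 with hc | hc
        · rw [min_eq_right (by nlinarith [mul_nonpos_of_nonneg_of_nonpos hεp0.le hc]),
            min_eq_left hc]
        · rw [min_eq_left (by nlinarith [mul_nonneg hεp0.le hc]), min_eq_right hc,
            mul_zero, add_zero]
      have hmin2 : min (m, m - εp * u).1 (m, m - εp * u).2 = m + εp * (-u) := by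
        simp only
        rw [harg2]
        exact min_eq_right (by nlinarith)
      rw [DriftAux.lam_eq_phi lam hlam hv1, DriftAux.lam_eq_phi lam hlam hv2, hmin1, hmin2]
    rw [Real.dist_eq, hEq]
    -- continuity of the rescaled increment
    have hψcont : ContinuousOn
        (fun h : ℝ => (φ (m + εp * min (h - u) 0) - φ (m + εp * (-u))) / εp)
        (uIcc (0:ℝ) 1) := by
      rw [uIcc_of_le zero_le_one]
      intro h hh
      apply ContinuousAt.continuousWithinAt
      apply ContinuousAt.div_const
      apply ContinuousAt.sub _ continuousAt_const
      have hinner : ContinuousAt (fun h : ℝ => m + εp * min (h - u) 0) h :=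
        (continuous_const.add (continuous_const.mul
          ((continuous_id.sub continuous_const).min continuous_const))).continuousAt
      have hval : 1 < m + εp * min (h - u) 0 := by
        have h1 : (0:ℝ) ≤ min (h - u) 0 + 1 :=
          by linarith [le_min (show -1 ≤ h - u by linarith [hh.1]) (show (-1:ℝ) ≤ 0 by norm_num)]
        nlinarith [mul_nonneg hεp0.le h1]
      exact ContinuousAt.comp (g := DriftAux.Phi lam)
        (f := fun h : ℝ => m + εp * min (h - u) 0)
        (DriftAux.phi_continuousAt lam hlam hval) hinner
    have hint1 : IntervalIntegrable
        (fun h => ((φ (m + εp * min (h - u) 0) - φ (m + εp * (-u))) / εp) * (h * kker σ h))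
        volume 0 1 := DriftAux.mulK_integrable σ hψcont
    have hint2 : IntervalIntegrable (fun h => D * (min h u * (h * kker σ h))) volume 0 1 :=
      (hminKint 0 1).const_mul D
    rw [← intervalIntegral.integral_sub hint1 hint2]
    have hbound : ∀ᵐ t ∂(volume.restrict (Set.uIoc (0:ℝ) 1)),
        ‖((φ (m + εp * min (t - u) 0) - φ (m + εp * (-u))) / εp) * (t * kker σ t)
          - D * (min t u * (t * kker σ t))‖ ≤ 2 * δ' * |t * kker σ t| := by
      filter_upwards [MeasureTheory.ae_restrict_mem measurableSet_uIoc] with h hh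
      rw [Set.uIoc_of_le zero_le_one] at hh
      have hh0 : (0:ℝ) ≤ h := hh.1.le
      have hh1 : h ≤ 1 := hh.2
      have hc1 : |min (h - u) 0| ≤ 1 := by
        rw [abs_le]
        exact ⟨le_min (by linarith) (by norm_num), le_trans (min_le_right _ _) zero_le_one⟩
      have hc2 : |(-u)| ≤ 1 := by rw [abs_neg, abs_of_nonneg hu0]; exact hu1
      have e1 := hr (min (h - u) 0) hc1
      have e2 := hr (-u) hc2
      have hminadd : min h u = min (h - u) 0 - (-u) := by
        rcases le_total h u with hc | hc
        · rw [min_eq_left hc, min_eq_left (by linarith)]; ring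
        · rw [min_eq_right hc, min_eq_right (by linarith)]; ring
      have key : (φ (m + εp * min (h - u) 0) - φ (m + εp * (-u))) / εp - D * min h u
          = ((φ (m + εp * min (h - u) 0) - φ m - εp * min (h - u) 0 * D)
            - (φ (m + εp * (-u)) - φ m - εp * (-u) * D)) / εp := by
        rw [hminadd]
        field_simp
        ring
      have hstep : |(φ (m + εp * min (h - u) 0) - φ (m + εp * (-u))) / εp - D * min h u|
          ≤ 2 * δ' := by
        rw [key, abs_div, abs_of_pos hεp0, div_le_iff₀ hεp0]
        calc |(φ (m + εp * min (h - u) 0) - φ m - εp * min (h - u) 0 * D)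
              - (φ (m + εp * (-u)) - φ m - εp * (-u) * D)|
            ≤ |φ (m + εp * min (h - u) 0) - φ m - εp * min (h - u) 0 * D|
              + |φ (m + εp * (-u)) - φ m - εp * (-u) * D| := abs_sub _ _
          _ ≤ δ' * (εp * |min (h - u) 0|) + δ' * (εp * |(-u)|) := add_le_add e1 e2
          _ ≤ 2 * δ' * εp := by
              nlinarith [mul_le_mul_of_nonneg_left hc1 (mul_pos hδ'pos hεp0).le,
                mul_le_mul_of_nonneg_left hc2 (mul_pos hδ'pos hεp0).le]
      calc ‖((φ (m + εp * min (h - u) 0) - φ (m + εp * (-u))) / εp) * (h * kker σ h)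
            - D * (min h u * (h * kker σ h))‖
          = |((φ (m + εp * min (h - u) 0) - φ (m + εp * (-u))) / εp - D * min h u)|
            * |h * kker σ h| := by
            rw [Real.norm_eq_abs, ← abs_mul]
            congr 1
            ring
        _ ≤ 2 * δ' * |h * kker σ h| :=
            mul_le_mul_of_nonneg_right hstep (abs_nonneg _)
    have hgint : IntervalIntegrable (fun h => 2 * δ' * |h * kker σ h|) volume 0 1 :=
      ((hKint 0 1).abs).const_mul _
    have hbound' := (ae_restrict_iff' measurableSet_uIoc).mp hbound
    rw [Set.uIoc_of_le zero_le_one] at hbound'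
    have hnb := intervalIntegral.norm_integral_le_of_norm_le zero_le_one hbound' hgint
    rw [Real.norm_eq_abs] at hnb
    apply lt_of_le_of_lt hnb
    have hfin : |(∫ h in (0:ℝ)..1, 2 * δ' * |h * kker σ h| : ℝ)| = 2 * δ' * C := by
      rw [intervalIntegral.integral_const_mul,
        abs_of_nonneg (mul_nonneg (by positivity) hC0)]
    rw [intervalIntegral.integral_const_mul, ← hC]
    have h2 : δ' * (2 * (C + 1)) = ε := div_mul_cancel₀ _ (by positivity)
    nlinarith
  · -- the "moreover" part
    apply eventually_nhdsWithin_of_forall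
    intro ε hε h hh
    have hεpos : (0:ℝ) < ε := hε
    have hnn : 0 ≤ ε * (h - u) := mul_nonneg hεpos.le (by linarith [hh.1])
    have hv : ((m, m + ε * (h - u)) : ℝ × ℝ) ∈ viable := by
      simp only [viable, mem_setOf_eq]
      exact lt_min_iff.mpr ⟨hm1, by linarith⟩
    rw [DriftAux.lam_eq_phi lam hlam hv]
    have hmin : min (m, m + ε * (h - u)).1 (m, m + ε * (h - u)).2 = m := by
      simp only
      exact min_eq_left (by linarith)
    rw [hmin]
    exact hlx
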